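/- Let γ > 1, θ = (γ-1)/2, and B₊ ≥ B₋. The region Σ(B₊, B₋) = {(ρ, m) : ρ ≥ 0, v + ρ^θ/θ ≤ B₊, v - ρ^θ/θ ≥ B₋} (with v = m/ρ for ρ > 0, and containing the vacuum states) is a convex subset of the (ρ, m)-plane. -/
import Mathlib

theorem stmt17 (γ θ Bp Bm : ℝ) (hγ : 1 < γ) (hθ : θ = (γ - 1) / 2) (hB : Bm ≤ Bp) :
    Convex ℝ {p : ℝ × ℝ | 0 ≤ p.1 ∧
      ((p.1 = 0 ∧ p.2 = 0) ∨
        (0 < p.1 ∧ p.2 / p.1 + p.1 ^ θ / θ ≤ Bp ∧ Bm ≤ p.2 / p.1 - p.1 ^ θ / θ))} := by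
  have hθ0 : 0 < θ := by rw [hθ]; linarith
  have key : {p : ℝ × ℝ | 0 ≤ p.1 ∧ ((p.1 = 0 ∧ p.2 = 0) ∨
        (0 < p.1 ∧ p.2 / p.1 + p.1 ^ θ / θ ≤ Bp ∧ Bm ≤ p.2 / p.1 - p.1 ^ θ / θ))}
      = {p : ℝ × ℝ | 0 ≤ p.1 ∧ θ * p.2 + p.1 ^ (θ + 1) ≤ Bp * θ * p.1 ∧
          Bm * θ * p.1 + p.1 ^ (θ + 1) ≤ θ * p.2} := by
    ext ⟨ρ, m⟩
    simp only [Set.mem_setOf_eq]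
    constructor
    · rintro ⟨hρ, ⟨h0, hm⟩ | ⟨hρ', h1, h2⟩⟩
      · subst h0; subst hm
        rw [Real.zero_rpow (by positivity)]
        norm_num
      · have e := Real.rpow_add_one (ne_of_gt hρ') θ
        refine ⟨hρ, ?_, ?_⟩
        · rw [e]
          rw [div_add_div _ _ (ne_of_gt hρ') (ne_of_gt hθ0),
            div_le_iff₀ (by positivity)] at h1
          nlinarith [h1]
        · rw [e]
          rw [div_sub_div _ _ (ne_of_gt hρ') (ne_of_gt hθ0),
            le_div_iff₀ (by positivity)] at h2
          nlinarith [h2]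
    · rintro ⟨hρ, h1, h2⟩
      refine ⟨hρ, ?_⟩
      rcases eq_or_lt_of_le hρ with h0 | hρ'
      · left
        rw [← h0] at h1 h2
        rw [Real.zero_rpow (by positivity)] at h1 h2
        constructor
        · exact h0.symm
        · nlinarith [h1, h2]
      · right
        have e := Real.rpow_add_one (ne_of_gt hρ') θ
        rw [e] at h1 h2
        refine ⟨hρ', ?_, ?_⟩
        · rw [div_add_div _ _ (ne_of_gt hρ') (ne_of_gt hθ0),
            div_le_iff₀ (by positivity)]
          nlinarith [h1]
        · rw [div_sub_div _ _ (ne_of_gt hρ') (ne_of_gt hθ0),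
            le_div_iff₀ (by positivity)]
          nlinarith [h2]
  rw [key]
  intro x hx y hy a b ha hb hab
  obtain ⟨hx1, hx2, hx3⟩ := hx
  obtain ⟨hy1, hy2, hy3⟩ := hy
  have hc := (convexOn_rpow (p := θ + 1) (by linarith)).2
    (Set.mem_Ici.mpr hx1) (Set.mem_Ici.mpr hy1) ha hb hab
  simp only [smul_eq_mul] at hc
  simp only [Set.mem_setOf_eq, Prod.fst_add, Prod.snd_add, Prod.smul_fst,
    Prod.smul_snd, smul_eq_mul]
  refine ⟨by positivity, ?_, ?_⟩
  · nlinarith [mul_le_mul_of_nonneg_left hx2 ha, mul_le_mul_of_nonneg_left hy2 hb, hc]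
  · nlinarith [mul_le_mul_of_nonneg_left hx3 ha, mul_le_mul_of_nonneg_left hy3 hb, hc,
      Real.rpow_nonneg (by positivity : (0:ℝ) ≤ a * x.1 + b * y.1) (θ + 1)]
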